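/- Let n be a natural number, let x be an n-bit word, and let g be the map on n-bit words given by g(t) = t OR (t + 1), with addition modulo 2^n. Then iterating g exactly n − ν(x) times starting from x yields the all-ones word, and for every k < n − ν(x), iterating g only k times starting from x yields a word that is not the all-ones word. (Hence the number of iterations of t ← t OR (t + 1) needed to reach the all-ones word equals the number of zero bits of the input.) -/

import Mathlib

/-- `nuBV x` is the number of one bits of the `n`-bit word `x`. -/
def nuBV {n : ℕ} (x : BitVec n) : ℕ := (Nat.digits 2 x.toNat).sum

lemma lor_key (a b : ℕ) : 2*a ||| (2*b+1) = 2*(a|||b)+1 := by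
  have := Nat.lor_bit false a true b
  simpa [Nat.bit, two_mul] using this

lemma digsum (m : ℕ) (h : 0 < m) :
    (Nat.digits 2 m).sum = m % 2 + (Nat.digits 2 (m/2)).sum := by
  obtain ⟨k, rfl⟩ : ∃ k, m = k + 1 := ⟨m - 1, by omega⟩
  rw [Nat.digits_add_two_add_one]
  simp

lemma popcount_le : ∀ n m : ℕ, m < 2^n → (Nat.digits 2 m).sum ≤ n := by
  intro n
  induction n with
  | zero => intro m hm; interval_cases m; simp
  | succ n ih =>
    intro m hm
    rcases Nat.eq_zero_or_pos m with rfl | hp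
    · simp
    · rw [digsum m hp]
      have := ih (m/2) (by omega)
      have := Nat.mod_lt m (show 0 < 2 by norm_num)
      omega

lemma popcount_eq_iff : ∀ n m : ℕ, m < 2^n → ((Nat.digits 2 m).sum = n ↔ m = 2^n - 1) := by
  intro n
  induction n with
  | zero => intro m hm; interval_cases m; simp
  | succ n ih =>
    intro m hm
    rcases Nat.eq_zero_or_pos m with rfl | hp
    · simp
      have : 0 < 2^(n+1) := Nat.pow_pos (by norm_num)
      omega
    · rw [digsum m hp]
      have h2 : m/2 < 2^n := by
        have : 2^(n+1) = 2*2^n := by ring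
        omega
      have hle := popcount_le n (m/2) h2
      have hiff := ih (m/2) h2
      have hmod := Nat.mod_lt m (show 0 < 2 by norm_num)
      constructor
      · intro h
        have h1 : m % 2 = 1 ∧ (Nat.digits 2 (m/2)).sum = n := by omega
        have := hiff.mp h1.2
        have h2n : 0 < 2^n := Nat.pow_pos (by norm_num)
        have : m = 2*(m/2) + m % 2 := (Nat.div_add_mod m 2).symm ▸ by omega
        have hp2 : 2^(n+1) = 2*2^n := by ring
        omega
      · intro h
        have h2n : 0 < 2^n := Nat.pow_pos (by norm_num)
        have hp2 : 2^(n+1) = 2*2^n := by ring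
        have hd : m / 2 = 2^n - 1 := by omega
        have hm2 : m % 2 = 1 := by omega
        have := hiff.mpr hd
        omega

lemma popcount_lor_succ (m : ℕ) :
    (Nat.digits 2 (m ||| (m+1))).sum = (Nat.digits 2 m).sum + 1 := by
  induction m using Nat.strong_induction_on with
  | _ m ih =>
    rcases Nat.even_or_odd m with ⟨q, rfl⟩ | ⟨q, rfl⟩
    · have heq : q + q = 2*q := by ring
      rw [heq]
      have h1 : 2*q ||| (2*q+1) = 2*q+1 := by
        rw [lor_key]; simp
      rw [h1, digsum (2*q+1) (by omega)]
      have h2 : (2*q+1) % 2 = 1 := by omega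
      have h3 : (2*q+1) / 2 = q := by omega
      rw [h2, h3]
      rcases Nat.eq_zero_or_pos q with rfl | hq
      · simp
      · rw [digsum (2*q) (by omega)]
        have : (2*q) % 2 = 0 := by omega
        have h5 : (2*q)/2 = q := by omega
        rw [this, h5]; omega
    · have h0 : 2*q+1+1 = 2*(q+1) := by ring
      rw [h0]
      have h1 : (2*q+1) ||| (2*(q+1)) = 2*(q ||| (q+1)) + 1 := by
        rw [Nat.lor_comm, lor_key, Nat.lor_comm]
      rw [h1, digsum (2*(q ||| (q+1))+1) (by omega), digsum (2*q+1) (by omega)]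
      have e1 : (2*(q ||| (q+1))+1) % 2 = 1 := by omega
      have e2 : (2*(q ||| (q+1))+1) / 2 = q ||| (q+1) := by omega
      have e3 : (2*q+1) % 2 = 1 := by omega
      have e4 : (2*q+1) / 2 = q := by omega
      rw [e1, e2, e3, e4, ih q (by omega)]; omega

lemma nuBV_le {n : ℕ} (x : BitVec n) : nuBV x ≤ n :=
  popcount_le n x.toNat x.isLt

lemma nuBV_eq_iff {n : ℕ} (x : BitVec n) : nuBV x = n ↔ x = BitVec.allOnes n := by
  rw [nuBV, popcount_eq_iff n x.toNat x.isLt]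
  constructor
  · intro h; apply BitVec.eq_of_toNat_eq; simp [h]
  · intro h; rw [h]; simp

lemma nuBV_g {n : ℕ} (x : BitVec n) (hx : x ≠ BitVec.allOnes n) :
    nuBV (x ||| (x + 1)) = nuBV x + 1 := by
  have hlt : x.toNat < 2^n := x.isLt
  have hne : x.toNat ≠ 2^n - 1 := by
    intro h
    apply hx
    apply BitVec.eq_of_toNat_eq
    simp [h]
  have h1 : (x + 1).toNat = x.toNat + 1 := by
    rw [BitVec.toNat_add]
    have hn : 0 < n := by
      rcases Nat.eq_zero_or_pos n with rfl | h
      · exact absurd (Subsingleton.elim x (BitVec.allOnes 0)) hx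
      · exact h
    have : (1 : BitVec n).toNat = 1 := by simp [BitVec.toNat_ofNat, Nat.one_mod_eq_one.mpr]; omega
    rw [this, Nat.mod_eq_of_lt (by omega)]
  unfold nuBV
  rw [BitVec.toNat_or, h1]
  exact popcount_lor_succ x.toNat

lemma main_aux (n : ℕ) (g : BitVec n → BitVec n)
    (hg : ∀ t, g t = t ||| (t + 1)) :
    ∀ m (x : BitVec n), n - nuBV x = m →
      g^[m] x = BitVec.allOnes n ∧ ∀ k < m, g^[k] x ≠ BitVec.allOnes n := by
  intro m
  induction m with
  | zero =>
    intro x hx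
    have h1 : nuBV x ≤ n := nuBV_le x
    have h2 : nuBV x = n := by omega
    refine ⟨?_, by omega⟩
    simpa using (nuBV_eq_iff x).mp h2
  | succ m ih =>
    intro x hx
    have h1 : nuBV x ≤ n := nuBV_le x
    have hne : x ≠ BitVec.allOnes n := by
      intro h
      have := (nuBV_eq_iff x).mpr h
      omega
    have hstep : nuBV (g x) = nuBV x + 1 := by rw [hg]; exact nuBV_g x hne
    have hgx : n - nuBV (g x) = m := by omega
    obtain ⟨ha, hb⟩ := ih (g x) hgx
    constructor
    · rw [Function.iterate_succ_apply]; exact ha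
    · intro k hk
      cases k with
      | zero => simpa using hne
      | succ j =>
        rw [Function.iterate_succ_apply]
        exact hb j (by omega)


/-- Iterating `g(t) = t OR (t + 1)` (addition modulo `2^n`) exactly
`n - ν(x)` times starting from the `n`-bit word `x` yields the all-ones word,
and any fewer number of iterations yields a word that is not all ones. -/
theorem or_succ_iterations (n : ℕ) (x : BitVec n) (g : BitVec n → BitVec n)
    (hg : ∀ t, g t = t ||| (t + 1)) :
    g^[n - nuBV x] x = BitVec.allOnes n ∧
      ∀ k < n - nuBV x, g^[k] x ≠ BitVec.allOnes n := by
  exact main_aux n g hg _ x rfl
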